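/- If f(z) = Σ a_n z^n is analytic in the unit disk with |f(z)| ≤ 1, then Σ_{n=0}^∞ |a_n| r^n ≤ 1 for all 0 ≤ r ≤ 1/3. -/

import Mathlib

open Metric Set Complex

noncomputable def bohrSeries (a : ℕ → ℂ) : FormalMultilinearSeries ℂ ℂ ℂ :=
  FormalMultilinearSeries.ofScalars ℂ a

lemma bohrSeries_apply (a : ℕ → ℂ) (n : ℕ) (y : ℂ) :
    (bohrSeries a n) (fun _ => y) = a n * y ^ n := by
  rw [bohrSeries, FormalMultilinearSeries.ofScalars_apply_eq]
  simp [smul_eq_mul, mul_comm]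

lemma bohrSeries_coeff (a : ℕ → ℂ) (n : ℕ) : (bohrSeries a).coeff n = a n := by
  have := bohrSeries_apply a n 1
  simp only [one_pow, mul_one] at this
  exact this

lemma bohr_hasFPowerSeries (f : ℂ → ℂ) (a : ℕ → ℂ)
    (hsum : ∀ z ∈ ball (0:ℂ) 1, HasSum (fun n => a n * z ^ n) (f z)) :
    HasFPowerSeriesOnBall f (bohrSeries a) 0 1 := by
  constructor
  · apply ENNReal.le_of_forall_nnreal_lt
    intro r hr
    have hr1 : (r:ℝ) < 1 := by exact_mod_cast hr
    have hz : ((r:ℝ):ℂ) ∈ ball (0:ℂ) 1 := by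
      rw [mem_ball_zero_iff, Complex.norm_real, Real.norm_of_nonneg r.coe_nonneg]
      exact hr1
    have htend : Filter.Tendsto (fun n => ‖a n * ((r:ℝ):ℂ)^n‖) Filter.atTop (nhds 0) := by
      simpa using ((hsum _ hz).summable.tendsto_atTop_zero).norm
    obtain ⟨C, hC⟩ := htend.bddAbove_range
    apply FormalMultilinearSeries.le_radius_of_bound _ C
    intro n
    have hnorm : ‖bohrSeries a n‖ = ‖a n‖ := by
      rw [bohrSeries]; exact FormalMultilinearSeries.ofScalars_norm ℂ a n
    have : ‖a n * ((r:ℝ):ℂ)^n‖ ≤ C := hC ⟨n, rfl⟩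
    calc ‖bohrSeries a n‖ * (r:ℝ)^n = ‖a n * ((r:ℝ):ℂ)^n‖ := by
          rw [hnorm, norm_mul, norm_pow, Complex.norm_real, Real.norm_of_nonneg r.coe_nonneg]
      _ ≤ C := this
  · exact one_pos
  · intro y hy
    have hy' : y ∈ ball (0:ℂ) 1 := by
      have hy2 : ‖y‖ₑ < 1 := by simpa using hy
      rw [enorm_eq_nnnorm, ENNReal.coe_lt_one_iff] at hy2
      rw [mem_ball_zero_iff, ← coe_nnnorm]; exact_mod_cast hy2
    have := hsum y hy'
    simp only [zero_add]
    have hfun : (fun n => (bohrSeries a n) fun _ => y) = fun n => a n * y ^ n := by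
      funext n; exact bohrSeries_apply a n y
    rw [hfun]
    exact this

lemma bohr_ball_eq : Metric.eball (0:ℂ) 1 = ball (0:ℂ) 1 := by
  rw [← ENNReal.coe_one, Metric.eball_coe, NNReal.coe_one]

lemma bohr_f0 (f : ℂ → ℂ) (a : ℕ → ℂ)
    (hsum : ∀ z ∈ ball (0:ℂ) 1, HasSum (fun n => a n * z ^ n) (f z)) : f 0 = a 0 := by
  have h1 := hsum 0 (mem_ball_self one_pos)
  have h2 : HasSum (fun n => a n * (0:ℂ)^n) (a 0) := by
    have := hasSum_single (f := fun n => a n * (0:ℂ)^n) 0 (fun b hb => by simp [zero_pow hb])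
    simpa using this
  exact h1.unique h2

lemma bohr_a1 (f : ℂ → ℂ) (a : ℕ → ℂ)
    (hsum : ∀ z ∈ ball (0:ℂ) 1, HasSum (fun n => a n * z ^ n) (f z))
    (hb : ∀ z ∈ ball (0:ℂ) 1, ‖f z‖ ≤ 1) : ‖a 1‖ ≤ 1 - ‖a 0‖^2 := by
  have hp := bohr_hasFPowerSeries f a hsum
  have hd : DifferentiableOn ℂ f (ball (0:ℂ) 1) := by
    have := hp.differentiableOn
    rwa [bohr_ball_eq] at this
  have hf0 : f 0 = a 0 := bohr_f0 f a hsum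
  have hderiv : deriv f 0 = a 1 := by
    rw [hp.hasFPowerSeriesAt.deriv]
    simpa using bohrSeries_apply a 1 1
  have ha0 : ‖a 0‖ ≤ 1 := hf0 ▸ hb 0 (mem_ball_self one_pos)
  rcases lt_or_eq_of_le ha0 with h | h
  · -- Möbius + Schwarz
    set α := a 0 with hα
    set g : ℂ → ℂ := fun z => (f z - α) / (1 - (starRingEnd ℂ) α * f z) with hg
    have hden : ∀ z ∈ ball (0:ℂ) 1, 1 - (starRingEnd ℂ) α * f z ≠ 0 := by
      intro z hz hc
      have h1 : ‖(starRingEnd ℂ) α * f z‖ ≤ ‖α‖ * 1 := by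
        rw [norm_mul, RCLike.norm_conj]
        exact mul_le_mul_of_nonneg_left (hb z hz) (norm_nonneg _)
      have h2 : (1:ℂ) = (starRingEnd ℂ) α * f z := by linear_combination hc
      rw [← h2] at h1
      simp only [norm_one, mul_one] at h1
      have : ‖α‖ < 1 := h
      have h1' : (1:ℝ) ≤ ‖α‖ := by simpa using h1
      linarith
    have hgd : DifferentiableOn ℂ g (ball (0:ℂ) 1) := by
      apply DifferentiableOn.div
      · exact hd.sub_const α
      · exact (differentiableOn_const 1).sub ((differentiableOn_const _).mul hd)
      · exact hden
    have hg0 : g 0 = 0 := by simp [hg, hf0]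
    have hkey : ∀ w : ℂ, ‖w‖ ≤ 1 → ‖w - α‖ ≤ ‖1 - (starRingEnd ℂ) α * w‖ := by
      intro w hw
      have hw2 : w.re^2 + w.im^2 ≤ 1 := by
        have := Complex.sq_norm w
        have h' : ‖w‖ ≤ 1 := hw
        nlinarith [Complex.normSq_apply w, norm_nonneg w]
      have hα2 : α.re^2 + α.im^2 ≤ 1 := by
        have := Complex.sq_norm α
        have h' : ‖α‖ ≤ 1 := le_of_lt h
        nlinarith [Complex.normSq_apply α, norm_nonneg α]
      have e1 : ‖w - α‖^2 = (w.re - α.re)^2 + (w.im - α.im)^2 := by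
        rw [Complex.sq_norm, Complex.normSq_apply, Complex.sub_re,
          Complex.sub_im]
        ring
      have e2 : ‖1 - (starRingEnd ℂ) α * w‖^2
          = (1 - (α.re*w.re + α.im*w.im))^2 + (α.re*w.im - α.im*w.re)^2 := by
        rw [Complex.sq_norm, Complex.normSq_apply]
        simp only [Complex.sub_re, Complex.sub_im, Complex.mul_re, Complex.mul_im,
          Complex.conj_re, Complex.conj_im, Complex.one_re, Complex.one_im]
        ring
      have hsq : ‖w - α‖^2 ≤ ‖1 - (starRingEnd ℂ) α * w‖^2 := by
        rw [e1, e2]; nlinarith [mul_nonneg (sub_nonneg.2 hα2) (sub_nonneg.2 hw2)]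
      nlinarith [hsq, norm_nonneg (w - α), norm_nonneg (1 - (starRingEnd ℂ) α * w)]
    have hgle : ∀ z ∈ ball (0:ℂ) 1, ‖g z‖ ≤ 1 := by
      intro z hz
      rw [hg]
      simp only
      rw [norm_div]
      rcases eq_or_ne (1 - (starRingEnd ℂ) α * f z) 0 with h0 | h0
      · exact absurd h0 (hden z hz)
      · rw [div_le_one (norm_pos_iff.2 h0)]
        exact hkey (f z) (hb z hz)
    -- Schwarz with radius 1 + ε
    have hds : ∀ ε : ℝ, 0 < ε → ‖deriv g 0‖ ≤ (1 + ε) / 1 := by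
      intro ε hε
      apply Complex.norm_deriv_le_div_of_mapsTo_ball hgd _ one_pos
      intro z hz
      rw [hg0, mem_closedBall_zero_iff]
      exact le_trans (hgle z hz) (by linarith)
    have hds1 : ‖deriv g 0‖ ≤ 1 := le_of_forall_pos_le_add (fun ε hε => by
      have h' := hds ε hε; rw [div_one] at h'; linarith)
    -- compute deriv g 0
    have hA : (1:ℝ) - ‖α‖^2 > 0 := by nlinarith [norm_nonneg α]
    have hden0 : (1:ℂ) - (starRingEnd ℂ) α * f 0 ≠ 0 := hden 0 (mem_ball_self one_pos)
    have hdf : DifferentiableAt ℂ f 0 := hd.differentiableAt (isOpen_ball.mem_nhds (mem_ball_self one_pos))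
    have hne : (1:ℂ) - (starRingEnd ℂ) α * α ≠ 0 := by
      have := hden0; rwa [hf0] at this
    have hgderiv : deriv g 0 = a 1 / (1 - (starRingEnd ℂ) α * α) := by
      rw [hg]
      rw [deriv_fun_div (c := fun z => f z - α) (d := fun z => 1 - (starRingEnd ℂ) α * f z) (by exact hdf.sub_const α)
        ((differentiableAt_const 1).sub ((differentiableAt_const _).mul hdf)) hden0]
      rw [deriv_sub_const, deriv_const_sub, deriv_const_mul _ hdf, hderiv, hf0]
      field_simp [hne]
      ring
    have hmc : (1:ℂ) - (starRingEnd ℂ) α * α = ((1 - ‖α‖^2 : ℝ) : ℂ) := by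
      rw [mul_comm, Complex.mul_conj, Complex.normSq_eq_norm_sq]
      push_cast
      ring
    rw [hgderiv, hmc] at hds1
    rw [norm_div, Complex.norm_real, Real.norm_of_nonneg (le_of_lt hA), div_le_one hA] at hds1
    linarith
  · -- boundary case : max modulus, f constant, a 1 = 0
    have hmax : IsMaxOn (norm ∘ f) (ball (0:ℂ) 1) 0 := by
      intro z hz
      simp only [Set.mem_setOf_eq, Function.comp_apply, hf0]
      rw [h]
      exact hb z hz
    have heq := Complex.eqOn_of_isPreconnected_of_isMaxOn_norm
      (convex_ball (0:ℂ) 1).isPreconnected isOpen_ball hd (mem_ball_self one_pos) hmax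
    have hev : f =ᶠ[nhds (0:ℂ)] (fun _ => f 0) := by
      filter_upwards [isOpen_ball.mem_nhds (mem_ball_self one_pos)] with z hz
      exact heq hz
    have : deriv f 0 = 0 := by
      rw [hev.deriv_eq]
      simp
    rw [this] at hderiv
    rw [← hderiv, h]
    simp

lemma bohr_coeff_bound (f : ℂ → ℂ) (a : ℕ → ℂ)
    (hsum : ∀ z ∈ ball (0:ℂ) 1, HasSum (fun n => a n * z ^ n) (f z))
    (hb : ∀ z ∈ ball (0:ℂ) 1, ‖f z‖ ≤ 1) (n : ℕ) (hn : 1 ≤ n) :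
    ‖a n‖ ≤ 1 - ‖a 0‖^2 := by
  have hn0 : (n:ℝ) ≠ 0 := by positivity
  have hnC : (n:ℂ) ≠ 0 := Nat.cast_ne_zero.2 (by omega)
  set b : ℕ → ℂ := fun k => a (n*k) with hbdef
  set ζ : ℂ := Complex.exp (2 * Real.pi * Complex.I / n) with hζdef
  have hζ : IsPrimitiveRoot ζ n := Complex.isPrimitiveRoot_exp n (by omega)
  have hζnorm : ‖ζ‖ = 1 := by
    rw [hζdef]
    have he : (2 * (Real.pi:ℂ) * Complex.I / (n:ℂ)) = ((2 * Real.pi / n : ℝ) : ℂ) * Complex.I := by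
      push_cast; ring
    rw [he, Complex.norm_exp]
    simp [Complex.mul_re]
  have hroot : ∀ m : ℕ, ∑ j ∈ Finset.range n, (ζ^m)^j = if n ∣ m then (n:ℂ) else 0 := by
    intro m
    by_cases hd : n ∣ m
    · rw [if_pos hd]
      have h1 : ζ^m = 1 := (hζ.pow_eq_one_iff_dvd m).2 hd
      simp [h1]
    · rw [if_neg hd]
      have h1 : ζ^m ≠ 1 := fun hc => hd ((hζ.pow_eq_one_iff_dvd m).1 hc)
      rw [geom_sum_eq h1]
      have h2 : (ζ^m)^n = 1 := by
        rw [← pow_mul, mul_comm, pow_mul, hζ.pow_eq_one, one_pow]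
      rw [h2]
      simp
  have main : ∀ w ∈ ball (0:ℂ) 1, ∃ S, HasSum (fun k => b k * w^k) S ∧ ‖S‖ ≤ 1 := by
    intro w hw
    obtain ⟨z, hz⟩ := IsAlgClosed.exists_pow_nat_eq w (n := n) (by omega)
    have hzlt : ‖z‖ < 1 := by
      by_contra hc
      push_neg at hc
      have h1 : (1:ℝ) ≤ ‖z‖^n := one_le_pow₀ hc
      rw [← norm_pow, hz] at h1
      rw [mem_ball_zero_iff] at hw
      linarith
    have hjz : ∀ j : ℕ, ζ^j * z ∈ ball (0:ℂ) 1 := by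
      intro j
      rw [mem_ball_zero_iff, norm_mul, norm_pow, hζnorm, one_pow, one_mul]
      exact hzlt
    set S : ℂ := (n:ℂ)⁻¹ * ∑ j ∈ Finset.range n, f (ζ^j * z) with hS
    have h2 : HasSum (fun m => (n:ℂ)⁻¹ * ∑ j ∈ Finset.range n, a m * (ζ^j*z)^m) S :=
      (hasSum_sum (fun j _ => hsum _ (hjz j))).mul_left _
    have h3 : (fun m => (n:ℂ)⁻¹ * ∑ j ∈ Finset.range n, a m * (ζ^j*z)^m)
        = fun m => if n ∣ m then a m * z^m else 0 := by
      funext m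
      have hterm : ∀ j ∈ Finset.range n, a m * (ζ^j*z)^m = a m * z^m * (ζ^m)^j := by
        intro j _
        rw [mul_pow, ← pow_mul, mul_comm j m, pow_mul]
        ring
      rw [Finset.sum_congr rfl hterm, ← Finset.mul_sum, hroot m]
      by_cases hd : n ∣ m
      · rw [if_pos hd, if_pos hd]
        field_simp [hnC]
      · rw [if_neg hd, if_neg hd]
        simp
    rw [h3] at h2
    have hinj : Function.Injective (fun k : ℕ => n * k) := fun x y hxy => by
      have : n * x = n * y := hxy
      exact Nat.eq_of_mul_eq_mul_left (by omega) this
    have hoff : ∀ m ∉ Set.range (fun k : ℕ => n * k),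
        (if n ∣ m then a m * z^m else 0) = 0 := by
      intro m hm
      rw [if_neg]
      intro hd
      obtain ⟨k, hk⟩ := hd
      exact hm ⟨k, hk.symm⟩
    have h4 : HasSum (fun k => b k * w^k) S := by
      have h5 := (Function.Injective.hasSum_iff hinj hoff).2 h2
      have h6 : ((fun m => if n ∣ m then a m * z^m else 0) ∘ (fun k : ℕ => n * k))
          = fun k => b k * w^k := by
        funext k
        simp only [Function.comp_apply, hbdef]
        rw [if_pos (Dvd.intro k rfl), pow_mul, hz]
      rwa [h6] at h5
    refine ⟨S, h4, ?_⟩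
    rw [hS, norm_mul]
    have h7 : ‖∑ j ∈ Finset.range n, f (ζ^j*z)‖ ≤ (n:ℝ) := by
      calc ‖∑ j ∈ Finset.range n, f (ζ^j*z)‖ ≤ ∑ j ∈ Finset.range n, ‖f (ζ^j*z)‖ :=
            norm_sum_le _ _
        _ ≤ ∑ j ∈ Finset.range n, 1 := Finset.sum_le_sum (fun j _ => hb _ (hjz j))
        _ = (n:ℝ) := by simp
    have h8 : ‖((n:ℂ))⁻¹‖ = (n:ℝ)⁻¹ := by
      rw [norm_inv, Complex.norm_natCast]
    rw [h8]
    calc (n:ℝ)⁻¹ * ‖∑ j ∈ Finset.range n, f (ζ^j*z)‖ ≤ (n:ℝ)⁻¹ * (n:ℝ) := by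
          apply mul_le_mul_of_nonneg_left h7 (by positivity)
      _ = 1 := by field_simp
  set F : ℂ → ℂ := fun w => ∑' k, b k * w^k with hF
  have hFsum : ∀ w ∈ ball (0:ℂ) 1, HasSum (fun k => b k * w^k) (F w) := by
    intro w hw
    obtain ⟨S, h1, _⟩ := main w hw
    rw [hF]
    simp only
    rwa [h1.tsum_eq]
  have hFb : ∀ w ∈ ball (0:ℂ) 1, ‖F w‖ ≤ 1 := by
    intro w hw
    obtain ⟨S, h1, h2⟩ := main w hw
    rw [hF]
    simp only
    rwa [h1.tsum_eq]
  have := bohr_a1 F b hFsum hFb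
  simpa [hbdef] using this


set_option maxHeartbeats 1000000

/-- Classical Bohr inequality: if `f(z) = Σ aₙ zⁿ` on the unit disk with `|f| ≤ 1`,
then `Σ |aₙ| rⁿ ≤ 1` for `0 ≤ r ≤ 1/3`. -/
theorem bohr_inequality (f : ℂ → ℂ) (a : ℕ → ℂ)
    (hsum : ∀ z ∈ Metric.ball (0 : ℂ) 1, HasSum (fun n => a n * z ^ n) (f z))
    (hb : ∀ z ∈ Metric.ball (0 : ℂ) 1, ‖f z‖ ≤ 1) :
    ∀ r : ℝ, 0 ≤ r → r ≤ 1 / 3 → ∑' n : ℕ, ‖a n‖ * r ^ n ≤ 1 := by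
  intro r hr0 hr13
  have ha0 : ‖a 0‖ ≤ 1 := by
    have := hb 0 (mem_ball_self one_pos)
    rwa [bohr_f0 f a hsum] at this
  have hcoef : ∀ n, 1 ≤ n → ‖a n‖ ≤ 1 - ‖a 0‖^2 := fun n h => bohr_coeff_bound f a hsum hb n h
  have hA0 : (0:ℝ) ≤ ‖a 0‖ := norm_nonneg _
  have hA2 : (0:ℝ) ≤ 1 - ‖a 0‖^2 := by nlinarith
  have hale : ∀ n, ‖a n‖ ≤ 1 := by
    intro n
    cases n with
    | zero => exact ha0
    | succ m => exact (hcoef _ (by omega)).trans (by nlinarith)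
  have hr1 : r < 1 := by linarith
  have hgeom : Summable (fun n : ℕ => r^n) := summable_geometric_of_lt_one hr0 hr1
  have hsummable : Summable (fun n => ‖a n‖ * r^n) := by
    apply Summable.of_nonneg_of_le (fun n => mul_nonneg (norm_nonneg _) (pow_nonneg hr0 _))
      (fun n => ?_) hgeom
    calc ‖a n‖ * r^n ≤ 1 * r^n := mul_le_mul_of_nonneg_right (hale n) (pow_nonneg hr0 n)
      _ = r^n := one_mul _
  have hsummable1 : Summable (fun n : ℕ => ‖a (n+1)‖ * r^(n+1)) :=
    (summable_nat_add_iff 1).2 hsummable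
  have hgeom1 : Summable (fun n : ℕ => r^(n+1)) := by
    have : (fun n : ℕ => r^(n+1)) = fun n : ℕ => r^n * r := funext fun n => pow_succ r n
    rw [this]
    exact hgeom.mul_right r
  have hsummable2 : Summable (fun n : ℕ => (1 - ‖a 0‖^2) * r^(n+1)) := hgeom1.mul_left _
  rw [Summable.tsum_eq_zero_add hsummable]
  have htail : ∑' n:ℕ, ‖a (n+1)‖ * r^(n+1) ≤ (1-‖a 0‖^2) * (r * (1-r)⁻¹) := by
    have h1 : ∑' n:ℕ, ‖a (n+1)‖ * r^(n+1) ≤ ∑' n:ℕ, (1-‖a 0‖^2) * r^(n+1) := by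
      apply Summable.tsum_le_tsum (fun n => ?_) hsummable1 hsummable2
      exact mul_le_mul_of_nonneg_right (hcoef (n+1) (by omega)) (pow_nonneg hr0 _)
    have h2 : ∑' n:ℕ, (1-‖a 0‖^2) * r^(n+1) = (1-‖a 0‖^2) * (r * (1-r)⁻¹) := by
      rw [tsum_mul_left]
      congr 1
      have he : (fun n : ℕ => r^(n+1)) = fun n : ℕ => r^n * r := funext fun n => pow_succ r n
      rw [he, tsum_mul_right, tsum_geometric_of_lt_one hr0 hr1]
      ring
    linarith
  have ht2 : r * (1-r)⁻¹ ≤ 1/2 := by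
    rw [← div_eq_mul_inv, div_le_iff₀ (by linarith)]
    linarith
  have ht0 : 0 ≤ r * (1-r)⁻¹ := by
    apply mul_nonneg hr0
    rw [inv_nonneg]
    linarith
  have hfin : ‖a 0‖ + (1-‖a 0‖^2) * (r * (1-r)⁻¹) ≤ 1 := by
    nlinarith [sq_nonneg (1 - ‖a 0‖), mul_le_mul_of_nonneg_left ht2 hA2]
  simp only [pow_zero, mul_one]
  linarith
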